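/- Let G be a compact Hausdorff topological abelian group and L a subgroup of G. The quotient G/L is uncountable if and only if L is not open in G. -/

import Mathlib

open Topology Filter Set Pointwise

/-- Translate of a set under a homeomorphism description. -/
lemma smul_set_eq_preimage_aux {G : Type*} [CommGroup G] [TopologicalSpace G]
    [IsTopologicalGroup G] (g : G) (s : Set G) :
    g • s = (Homeomorph.mulLeft g⁻¹) ⁻¹' s := by
  ext x
  simp [Set.mem_smul_set_iff_inv_smul_mem]

lemma isMeagre_smul_aux {G : Type*} [CommGroup G] [TopologicalSpace G]
    [IsTopologicalGroup G] (g : G) {s : Set G} (h : IsMeagre s) : IsMeagre (g • s) := by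
  rw [smul_set_eq_preimage_aux]
  exact h.preimage_of_isOpenMap (Homeomorph.mulLeft g⁻¹).continuous
    (Homeomorph.mulLeft g⁻¹).isOpenMap

lemma eventuallyEq_smul_aux {G : Type*} [CommGroup G] [TopologicalSpace G]
    [IsTopologicalGroup G] (g : G) {s t : Set G}
    (h : {x | (x ∈ s) = (x ∈ t)} ∈ residual G) :
    {x | (x ∈ g • s) = (x ∈ g • t)} ∈ residual G := by
  have hmap := tendsto_residual_of_isOpenMap (Homeomorph.mulLeft g⁻¹).continuous
      (Homeomorph.mulLeft g⁻¹).isOpenMap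
  have h2 : (Homeomorph.mulLeft g⁻¹) ⁻¹' {x | (x ∈ s) = (x ∈ t)} ∈ residual G := hmap h
  refine Filter.mem_of_superset h2 ?_
  intro x hx
  simp only [Set.mem_preimage, Set.mem_setOf_eq] at hx ⊢
  rw [smul_set_eq_preimage_aux g s, smul_set_eq_preimage_aux g t]
  exact hx

/-- Pettis-type step: if `L` agrees with an open set `u` off a meager set, then
`a * b⁻¹ ∈ L` for any `a b ∈ u`. -/
lemma pettis_aux {G : Type*} [CommGroup G] [TopologicalSpace G] [IsTopologicalGroup G]
    [BaireSpace G] {L : Subgroup G} {u : Set G} (hu : IsOpen u)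
    (heq : {x | (x ∈ (L : Set G)) = (x ∈ u)} ∈ residual G)
    {a b : G} (ha : a ∈ u) (hb : b ∈ u) : a * b⁻¹ ∈ L := by
  set g := a * b⁻¹ with hg
  by_contra hgL
  have heq2 : {x | (x ∈ g • (L : Set G)) = (x ∈ g • u)} ∈ residual G :=
    eventuallyEq_smul_aux g heq
  -- the open set v is nonempty
  set v : Set G := (g • u) ∩ u with hv
  have hvo : IsOpen v := ((hu.smul g)).inter hu
  have hav : a ∈ v := by
    constructor
    · rw [Set.mem_smul_set_iff_inv_smul_mem]
      have : g⁻¹ • a = b := by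
        simp [hg, smul_eq_mul, mul_comm, mul_assoc]
      rwa [this]
    · exact ha
  -- the cosets g • L and L are disjoint
  have hdisj : (g • (L : Set G)) ∩ (L : Set G) = ∅ := by
    ext x
    simp only [Set.mem_inter_iff, Set.mem_empty_iff_false, iff_false, not_and]
    intro hx hxL
    rw [Set.mem_smul_set_iff_inv_smul_mem] at hx
    exact hgL (by simpa using L.mul_mem hxL (L.inv_mem hx))
  -- v is covered by the two disagreement sets
  have hsub : v ⊆ {x | (x ∈ g • (L : Set G)) = (x ∈ g • u)}ᶜ ∪
      {x | (x ∈ (L : Set G)) = (x ∈ u)}ᶜ := by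
    intro x ⟨hx1, hx2⟩
    by_contra hxn
    simp only [Set.mem_union, Set.mem_compl_iff, Set.mem_setOf_eq, not_or, not_not] at hxn
    have hxL1 : x ∈ g • (L : Set G) := hxn.1 ▸ hx1
    have hxL2 : x ∈ (L : Set G) := hxn.2 ▸ hx2
    have : x ∈ (g • (L : Set G)) ∩ (L : Set G) := ⟨hxL1, hxL2⟩
    rw [hdisj] at this
    exact this
  -- hence v is meager
  have hvres : vᶜ ∈ residual G := by
    have h1 : ({x | (x ∈ g • (L : Set G)) = (x ∈ g • u)}ᶜ ∪
        {x | (x ∈ (L : Set G)) = (x ∈ u)}ᶜ)ᶜ ∈ residual G := by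
      rw [Set.compl_union, compl_compl, compl_compl]
      exact Filter.inter_mem heq2 heq
    exact Filter.mem_of_superset h1 (Set.compl_subset_compl.mpr hsub)
  -- contradiction with Baire category
  have hd : Dense vᶜ := dense_of_mem_residual hvres
  obtain ⟨x, hx1, hx2⟩ := hd.inter_open_nonempty v hvo ⟨a, hav⟩
  exact hx2 hx1

/-- Let `G` be a compact Hausdorff topological abelian group and `L` a subgroup with
the Baire property. Then `G/L` is uncountable if and only if `L` is not open. -/
theorem stmt10 {G : Type*} [CommGroup G] [TopologicalSpace G] [IsTopologicalGroup G]
    [CompactSpace G] [T2Space G] (L : Subgroup G)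
    (hBaire : BaireMeasurableSet (L : Set G)) :
    ¬ Countable (G ⧸ L) ↔ ¬ IsOpen (L : Set G) := by
  rw [not_iff_not]
  constructor
  · -- Countable quotient → L open
    intro hc
    -- L is not meager
    have hLnm : ¬ IsMeagre (L : Set G) := by
      intro hm
      have hcos : ∀ q : G ⧸ L, IsMeagre ((Quotient.out q) • (L : Set G)) :=
        fun q => isMeagre_smul_aux _ hm
      have hres : (⋂ q : G ⧸ L, ((Quotient.out q) • (L : Set G))ᶜ) ∈ residual G :=
        (countable_iInter_mem.mpr hcos)
      have hcover : (⋂ q : G ⧸ L, ((Quotient.out q) • (L : Set G))ᶜ) = ∅ := by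
        ext x
        simp only [Set.mem_iInter, Set.mem_compl_iff, Set.mem_empty_iff_false, iff_false,
          not_forall, not_not]
        refine ⟨QuotientGroup.mk x, ?_⟩
        rw [Set.mem_smul_set_iff_inv_smul_mem]
        rw [smul_eq_mul]
        have h : (QuotientGroup.mk (Quotient.out (QuotientGroup.mk x : G ⧸ L)) : G ⧸ L)
            = QuotientGroup.mk x := Quotient.out_eq' _
        exact QuotientGroup.eq.mp h
      rw [hcover] at hres
      have := (dense_of_mem_residual hres).nonempty
      exact Set.not_nonempty_empty this
    obtain ⟨u, huo, hLu⟩ := hBaire.residualEq_isOpen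
    have heq : {x | (x ∈ (L : Set G)) = (x ∈ u)} ∈ residual G := hLu
    -- u is nonempty
    have hune : u.Nonempty := by
      by_contra hne
      rw [Set.not_nonempty_iff_eq_empty] at hne
      subst hne
      apply hLnm
      refine Filter.mem_of_superset heq ?_
      intro x hx
      simp only [Set.mem_setOf_eq, Set.mem_empty_iff_false, eq_iff_iff, iff_false] at hx
      exact hx
    obtain ⟨b, hb⟩ := hune
    -- L contains the open neighborhood u * b⁻¹ of 1
    apply Subgroup.isOpen_of_mem_nhds
    have hwo : IsOpen ((fun x => x * b⁻¹) '' u) :=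
      (Homeomorph.mulRight b⁻¹).isOpenMap u huo
    have hw1 : (1 : G) ∈ (fun x => x * b⁻¹) '' u := ⟨b, hb, mul_inv_cancel b⟩
    have hwL : ((fun x => x * b⁻¹) '' u) ⊆ (L : Set G) := by
      rintro _ ⟨a, ha, rfl⟩
      exact pettis_aux huo heq ha hb
    exact Filter.mem_of_superset (hwo.mem_nhds hw1) hwL
  · -- L open → Countable quotient
    intro ho
    have := L.quotient_finite_of_isOpen ho
    exact Finite.to_countable
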